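/- arXiv:2509.18203 — 2 statements merged into one kernel-verified Lean document; each statement's English description precedes it below -/
import Mathlib

section
/- In the d-dimensional lattice graph, for d−1 ≤ t ≤ dn−1, the kernel of the DtN submatrix T^{(t)} = Λ_γ(∂D \ J_t^S; J_t^S) equals the kernel of T₁^{(t)}: a boundary potential φ supported on J_t^S produces zero current on ∂D \ J_t^S if and only if its γ-harmonic extension vanishes on the slice L_{t+1}. -/
noncomputable section
open Classical Finset

namespace DiscreteCalderon

/-- Vertices of the ambient lattice `ℤ^d`. -/
abbrev V (d : ℕ) := Fin d → ℤ

/-- Interior vertex set `D = {x : 1 ≤ x_i ≤ n}`. -/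
def Dset (d n : ℕ) : Set (V d) := {x | ∀ i, 1 ≤ x i ∧ x i ≤ (n : ℤ)}

/-- ℓ¹ distance. -/
def dist1 {d : ℕ} (p q : V d) : ℤ := ∑ i, |p i - q i|

/-- Boundary vertex set `∂D`: vertices at ℓ¹ distance 1 from `D`. -/
def Bset (d n : ℕ) : Set (V d) := {p | p ∉ Dset d n ∧ ∃ q ∈ Dset d n, dist1 p q = 1}

/-- All vertices of the graph, `D ∪ ∂D`. -/
def Vset (d n : ℕ) : Set (V d) := Dset d n ∪ Bset d n

/-- Adjacency of the lattice graph: ℓ¹ distance 1, both endpoints vertices,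
not both on the boundary. -/
def Adj (d n : ℕ) (p q : V d) : Prop :=
  dist1 p q = 1 ∧ p ∈ Vset d n ∧ q ∈ Vset d n ∧ (p ∈ Dset d n ∨ q ∈ Dset d n)

/-- A finite box containing all vertices. -/
def box (d n : ℕ) : Finset (V d) :=
  Fintype.piFinset (fun _ : Fin d => Finset.Icc (0 : ℤ) ((n : ℤ) + 1))

/-- Neighbours of `p` in the graph, as a finite set. -/
def nbr (d n : ℕ) (p : V d) : Finset (V d) := (box d n).filter (fun q => Adj d n p q)

/-- Interior neighbours of `p`. -/
def nbrD (d n : ℕ) (p : V d) : Finset (V d) := (nbr d n p).filter (fun q => q ∈ Dset d n)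

/-- The discrete (weighted) Laplacian `(Δ_γ u)_p = ∑_{q∈N(p)} γ_{qp}(u_q - u_p)`. -/
def lap (d n : ℕ) (γ : V d → V d → ℝ) (u : V d → ℝ) (p : V d) : ℝ :=
  ∑ q ∈ nbr d n p, γ q p * (u q - u p)

/-- The boundary current `(D_γ u)_p = ∑_{q∈N(p)∩D} γ_{pq}(u_q - u_p)`
(there is exactly one interior neighbour of a boundary node). -/
def cur (d n : ℕ) (γ : V d → V d → ℝ) (u : V d → ℝ) (p : V d) : ℝ :=
  ∑ q ∈ nbrD d n p, γ p q * (u q - u p)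

/-- A strictly positive symmetric conductivity. -/
def GoodCond (d n : ℕ) (γ : V d → V d → ℝ) : Prop :=
  (∀ p q, γ p q = γ q p) ∧ ∀ p q, Adj d n p q → 0 < γ p q

/-- The coordinate sum of a lattice point. -/
def sum1 {d : ℕ} (x : V d) : ℤ := ∑ i, x i

/-- Interior diagonal slice `L_t`. -/
def L (d n : ℕ) (t : ℤ) : Set (V d) := {x | x ∈ Dset d n ∧ sum1 x = t}

/-- `L_t^S = ∪_{ℓ ≤ t} L_ℓ`. -/
def LS (d n : ℕ) (t : ℤ) : Set (V d) := {x | x ∈ Dset d n ∧ sum1 x ≤ t}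

/-- Boundary diagonal slice `K_t`. -/
def K (d n : ℕ) (t : ℤ) : Set (V d) := {x | x ∈ Bset d n ∧ sum1 x = t}

/-- `K_t^- = {x ∈ K_t : min_i x_i = 0}`. -/
def Km (d n : ℕ) (t : ℤ) : Set (V d) := {x | x ∈ K d n t ∧ ∃ i, x i = 0}

/-- `K_t^+ = {x ∈ K_t : max_i x_i = n+1}`. -/
def Kp (d n : ℕ) (t : ℤ) : Set (V d) := {x | x ∈ K d n t ∧ ∃ i, x i = (n : ℤ) + 1}

/-- `K_t^{S-} = ∪_{ℓ ≤ t} K_ℓ^-`. -/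
def KSm (d n : ℕ) (t : ℤ) : Set (V d) := {x | x ∈ Bset d n ∧ sum1 x ≤ t ∧ ∃ i, x i = 0}

/-- `K_t^{S+} = ∪_{ℓ ≤ t} K_ℓ^+`. -/
def KSp (d n : ℕ) (t : ℤ) : Set (V d) := {x | x ∈ Bset d n ∧ sum1 x ≤ t ∧ ∃ i, x i = (n : ℤ) + 1}

/-- The lower boundary region `J_t^S = K_t^{S-} ∪ K_{t+1}^{S+}`. -/
def JS (d n : ℕ) (t : ℤ) : Set (V d) := KSm d n t ∪ KSp d n (t + 1)

/-- `J_t = K_t^- ∪ K_{t+1}^+`. -/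
def Jslice (d n : ℕ) (t : ℤ) : Set (V d) := Km d n t ∪ Kp d n (t + 1)

/-- `u` is the γ-harmonic extension of boundary data `φ` (zero-extension convention
outside `D ∪ ∂D`). -/
def IsSol (d n : ℕ) (γ : V d → V d → ℝ) (φ u : V d → ℝ) : Prop :=
  (∀ p, p ∉ Vset d n → u p = 0) ∧
  (∀ p ∈ Dset d n, lap d n γ u p = 0) ∧
  (∀ p ∈ Bset d n, u p = φ p)

/-- The Laplacian row vector `v_p`. -/
def vrow (d n : ℕ) (γ : V d → V d → ℝ) (p : V d) : V d → ℝ := fun q =>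
  if Adj d n p q then γ p q
  else if q = p then -(∑ r ∈ nbr d n p, γ p r) else 0

/-- Restriction of a function to a set (zero outside). -/
def rst {d : ℕ} (S : Set (V d)) (f : V d → ℝ) : V d → ℝ := fun q => if q ∈ S then f q else 0

/-- Euclidean inner product of (vertex-supported) functions. -/
def dot (d n : ℕ) (f g : V d → ℝ) : ℝ := ∑ p ∈ box d n, f p * g p

/-- The localized solution space `𝒰^{(t)}`: restrictions to `L_t^S ∪ J_t^S` of
harmonic extensions of boundary potentials in `ker T₁^{(t)}`. -/
def Uset (d n : ℕ) (γ : V d → V d → ℝ) (t : ℤ) : Set (V d → ℝ) :=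
  {u | (∀ p, p ∉ LS d n t ∪ JS d n t → u p = 0) ∧
    ∃ φ w : V d → ℝ, (∀ p, p ∉ JS d n t → φ p = 0) ∧ IsSol d n γ φ w ∧
      (∀ p ∈ L d n (t + 1), w p = 0) ∧ ∀ p ∈ LS d n t ∪ JS d n t, u p = w p}

/-- The set `E_t` of edges between the consecutive layers:
`E(K_t^-, L_{t+1}) ∪ E(L_t, K_{t+1}^+) ∪ E(L_t, L_{t+1})`. -/
def EdgeT (d n : ℕ) (t : ℤ) (p q : V d) : Prop :=
  Adj d n p q ∧
    ((p ∈ Km d n t ∧ q ∈ L d n (t + 1)) ∨ (q ∈ Km d n t ∧ p ∈ L d n (t + 1)) ∨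
     (p ∈ L d n t ∧ q ∈ Kp d n (t + 1)) ∨ (q ∈ L d n t ∧ p ∈ Kp d n (t + 1)) ∨
     (p ∈ L d n t ∧ q ∈ L d n (t + 1)) ∨ (q ∈ L d n t ∧ p ∈ L d n (t + 1)))

/-- The edge vector `J_p^u ∈ ℝ^{E_t}`, `J_p^u(pq) = u_p - u_q` on edges of `E_t`
incident to `p`, and `0` otherwise (as a symmetric function of edge endpoints). -/
def Jvec (d n : ℕ) (t : ℤ) (u : V d → ℝ) (p : V d) : V d → V d → ℝ := fun a b =>
  if EdgeT d n t a b then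
    (if a = p then u a - u b else if b = p then u b - u a else 0)
  else 0

/-- Inner product of edge functions. -/
def dotE (d n : ℕ) (f g : V d → V d → ℝ) : ℝ :=
  ∑ p ∈ box d n, ∑ q ∈ box d n, f p q * g p q

section Helpers

variable {d n : ℕ}

lemma abs_sum_one {f : Fin d → ℤ} (h : ∑ i, |f i| = 1) :
    ∃ i, (f i = 1 ∨ f i = -1) ∧ ∀ j, j ≠ i → f j = 0 := by
  have hex : ∃ i, f i ≠ 0 := by
    by_contra hc
    push_neg at hc
    simp [hc] at h
  obtain ⟨i, hi⟩ := hex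
  have h1 : 1 ≤ |f i| := Int.one_le_abs hi
  have hsplit : |f i| + ∑ j ∈ Finset.univ.erase i, |f j| = 1 := by
    rw [← h]
    exact Finset.add_sum_erase Finset.univ (fun j => |f j|) (Finset.mem_univ i)
  have hnn : 0 ≤ ∑ j ∈ Finset.univ.erase i, |f j| :=
    Finset.sum_nonneg fun j _ => abs_nonneg _
  have hz : ∑ j ∈ Finset.univ.erase i, |f j| = 0 := by omega
  refine ⟨i, ?_, ?_⟩
  · have hfi : |f i| = 1 := by omega
    rcases abs_eq (by norm_num : (0:ℤ) ≤ 1) |>.mp hfi with h' | h'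
    · exact Or.inl h'
    · exact Or.inr h'
  · intro j hj
    have := (Finset.sum_eq_zero_iff_of_nonneg (fun j _ => abs_nonneg (f j))).mp hz j
      (Finset.mem_erase.mpr ⟨hj, Finset.mem_univ j⟩)
    exact abs_eq_zero.mp this

lemma dist1_one {p q : V d} (h : dist1 p q = 1) :
    ∃ i, (q i = p i + 1 ∨ q i = p i - 1) ∧ ∀ j, j ≠ i → q j = p j := by
  obtain ⟨i, hi, hj⟩ := abs_sum_one (f := fun i => p i - q i) (by simpa [dist1] using h)
  refine ⟨i, by omega, fun j hji => ?_⟩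
  have := hj j hji; omega

lemma dist1_single {p q : V d} (i : Fin d) (h1 : q i = p i + 1 ∨ q i = p i - 1)
    (h2 : ∀ j, j ≠ i → q j = p j) : dist1 p q = 1 := by
  rw [dist1, Finset.sum_eq_single_of_mem i (Finset.mem_univ i)]
  · have : p i - q i = -1 ∨ p i - q i = 1 := by omega
    rcases this with h | h <;> rw [h] <;> norm_num
  · intro j _ hj
    rw [h2 j hj]
    simp

lemma dist1_update (p : V d) (i : Fin d) {c : ℤ} (h : c = p i + 1 ∨ c = p i - 1) :
    dist1 p (Function.update p i c) = 1 := by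
  apply dist1_single i
  · simpa using h
  · intro j hj; exact Function.update_of_ne hj _ _

lemma sum1_nbr {p q : V d} (i : Fin d) (h2 : ∀ j, j ≠ i → q j = p j) :
    sum1 q = sum1 p + (q i - p i) := by
  have hs : sum1 q - sum1 p = ∑ j, (q j - p j) := by
    rw [sum1, sum1, ← Finset.sum_sub_distrib]
  have h1 : ∑ j, (q j - p j) = q i - p i := by
    apply Finset.sum_eq_single_of_mem i (Finset.mem_univ i)
    intro j _ hj
    rw [h2 j hj]; ring
  omega

lemma sum1_update (p : V d) (i : Fin d) (c : ℤ) :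
    sum1 (Function.update p i c) = sum1 p - p i + c := by
  have := sum1_nbr (p := p) (q := Function.update p i c) i
    (fun j hj => Function.update_of_ne hj _ _)
  rw [Function.update_self] at this
  omega

lemma sum1_le_of_D {p : V d} (hp : p ∈ Dset d n) : sum1 p ≤ (d:ℤ) * n := by
  calc sum1 p ≤ ∑ _i : Fin d, (n:ℤ) := Finset.sum_le_sum fun i _ => (hp i).2
  _ = (d:ℤ) * n := by simp [mul_comm]

lemma mem_box_of_V {p : V d} (hp : p ∈ Vset d n) : p ∈ box d n := by
  rw [box, Fintype.mem_piFinset]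
  intro i
  rw [Finset.mem_Icc]
  rcases hp with hp | hp
  · have := hp i; omega
  · obtain ⟨hnd, q, hq, hdist⟩ := hp
    obtain ⟨j, hj, hrest⟩ := dist1_one hdist
    have hqi := hq i
    by_cases hij : i = j
    · subst hij; omega
    · have := hrest i hij; omega

lemma bset_iff (hn : 1 ≤ n) {p : V d} :
    p ∈ Bset d n ↔ ∃ i, (p i = 0 ∨ p i = (n:ℤ) + 1) ∧ ∀ j, j ≠ i → 1 ≤ p j ∧ p j ≤ (n:ℤ) := by
  constructor
  · rintro ⟨hnd, q, hq, hdist⟩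
    obtain ⟨i, hi, hrest⟩ := dist1_one hdist
    refine ⟨i, ?_, fun j hj => ?_⟩
    · have hnd' : ¬ ∀ k, 1 ≤ p k ∧ p k ≤ (n:ℤ) := hnd
      push_neg at hnd'
      obtain ⟨k, hk⟩ := hnd'
      have hqk := hq k
      by_cases hki : k = i
      · subst hki
        rcases hi with hi | hi <;> omega
      · have := hrest k hki; omega
    · have := hrest j hj
      have := hq j
      omega
  · rintro ⟨i, hi, hrest⟩
    have hq : Function.update p i (if p i = 0 then 1 else (n:ℤ)) ∈ Dset d n := by
      intro j
      by_cases hj : j = i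
      · subst hj; rw [Function.update_self]
        split <;> omega
      · rw [Function.update_of_ne hj]; exact hrest j hj
    refine ⟨?_, _, hq, ?_⟩
    · intro hcon
      have := hcon i
      rcases hi with h | h <;> omega
    · apply dist1_update
      rcases hi with h | h
      · rw [if_pos h]; omega
      · rw [if_neg (by omega)]; omega

lemma mem_nbr {p q : V d} : q ∈ nbr d n p ↔ Adj d n p q := by
  rw [nbr, Finset.mem_filter]
  exact ⟨fun h => h.2, fun h => ⟨mem_box_of_V h.2.2.1, h⟩⟩

lemma notJS_of {t : ℤ} {p : V d} (hp : t + 1 ≤ sum1 p) (hno : ∀ i, p i ≠ (n:ℤ) + 1) :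
    p ∉ JS d n t := by
  rintro (⟨_, hs, _⟩ | ⟨_, hs, i, hi⟩)
  · omega
  · exact hno i hi

lemma notJS_high {t : ℤ} {p : V d} (hp : t + 2 ≤ sum1 p) : p ∉ JS d n t := by
  rintro (⟨_, hs, _⟩ | ⟨_, hs, _⟩) <;> omega

lemma updD_bot (hn : 1 ≤ n) {p : V d} (i : Fin d)
    (hro : ∀ j, j ≠ i → 1 ≤ p j ∧ p j ≤ (n:ℤ)) :
    Function.update p i 1 ∈ Dset d n := by
  intro j
  by_cases hj : j = i
  · subst hj; rw [Function.update_self]; omega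
  · rw [Function.update_of_ne hj]; exact hro j hj

lemma updD_top (hn : 1 ≤ n) {p : V d} (i : Fin d)
    (hro : ∀ j, j ≠ i → 1 ≤ p j ∧ p j ≤ (n:ℤ)) :
    Function.update p i (n:ℤ) ∈ Dset d n := by
  intro j
  by_cases hj : j = i
  · subst hj; rw [Function.update_self]; omega
  · rw [Function.update_of_ne hj]; exact hro j hj

lemma nbrD_bot (hn : 1 ≤ n) {p : V d} (i : Fin d) (h0 : p i = 0)
    (hro : ∀ j, j ≠ i → 1 ≤ p j ∧ p j ≤ (n:ℤ)) :
    nbrD d n p = {Function.update p i 1} := by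
  have hpB : p ∈ Bset d n := (bset_iff hn).mpr ⟨i, Or.inl h0, hro⟩
  have hqD := updD_bot hn i hro
  ext r
  simp only [nbrD, nbr, Finset.mem_filter, Finset.mem_singleton]
  constructor
  · rintro ⟨⟨_, hadj⟩, hrD⟩
    obtain ⟨m, hm, hrest⟩ := dist1_one hadj.1
    by_cases hmi : m = i
    · subst hmi
      funext j
      by_cases hj : j = m
      · subst hj
        rw [Function.update_self]
        have h1 := (hrD j).1
        rcases hm with h | h <;> omega
      · rw [Function.update_of_ne hj]; exact hrest j hj
    · exfalso
      have h1 := (hrD i).1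
      have h2 : r i = p i := hrest i (fun hc => hmi hc.symm)
      omega
  · rintro rfl
    refine ⟨⟨mem_box_of_V (Set.mem_union_left _ hqD),
      dist1_update p i (Or.inl (by omega)),
      Set.mem_union_right _ hpB, Set.mem_union_left _ hqD, Or.inr hqD⟩, hqD⟩

lemma nbrD_top (hn : 1 ≤ n) {p : V d} (i : Fin d) (h0 : p i = (n:ℤ) + 1)
    (hro : ∀ j, j ≠ i → 1 ≤ p j ∧ p j ≤ (n:ℤ)) :
    nbrD d n p = {Function.update p i (n:ℤ)} := by
  have hpB : p ∈ Bset d n := (bset_iff hn).mpr ⟨i, Or.inr h0, hro⟩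
  have hqD := updD_top hn i hro
  ext r
  simp only [nbrD, nbr, Finset.mem_filter, Finset.mem_singleton]
  constructor
  · rintro ⟨⟨_, hadj⟩, hrD⟩
    obtain ⟨m, hm, hrest⟩ := dist1_one hadj.1
    by_cases hmi : m = i
    · subst hmi
      funext j
      by_cases hj : j = m
      · subst hj
        rw [Function.update_self]
        have h1 := (hrD j).2
        rcases hm with h | h <;> omega
      · rw [Function.update_of_ne hj]; exact hrest j hj
    · exfalso
      have h1 := (hrD i).2
      have h2 : r i = p i := hrest i (fun hc => hmi hc.symm)
      omega
  · rintro rfl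
    refine ⟨⟨mem_box_of_V (Set.mem_union_left _ hqD),
      dist1_update p i (Or.inr (by omega)),
      Set.mem_union_right _ hpB, Set.mem_union_left _ hqD, Or.inr hqD⟩, hqD⟩

lemma meas_lt {a b c e N : ℕ} (hab : a < b) (hc : c ≤ N) :
    a * (N + 1) + c < b * (N + 1) + e := by
  have h2 : (a + 1) * (N + 1) ≤ b * (N + 1) := Nat.mul_le_mul_right _ hab
  have h3 : (a + 1) * (N + 1) = a * (N + 1) + (N + 1) := by ring
  linarith

end Helpers

/-- `ker T^{(t)} = ker T₁^{(t)}`: a boundary potential supported on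
`J_t^S` produces zero current on `∂D \ J_t^S` iff its harmonic extension vanishes
on the slice `L_{t+1}`. -/
theorem stmt11 (d n : ℕ) (hd : 2 ≤ d) (hn : 1 ≤ n)
    (γ : V d → V d → ℝ) (hγ : GoodCond d n γ)
    (t : ℤ) (ht1 : (d : ℤ) - 1 ≤ t) (ht2 : t ≤ (d : ℤ) * n - 1)
    (φ u : V d → ℝ)
    (hφ : ∀ p, p ∉ JS d n t → φ p = 0)
    (hu : IsSol d n γ φ u) :
    (∀ p ∈ Bset d n \ JS d n t, cur d n γ u p = 0) ↔
      (∀ p ∈ L d n (t + 1), u p = 0) := by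
  obtain ⟨hγs, hγp⟩ := hγ
  obtain ⟨hu0, huh, hub⟩ := hu
  have hd0 : 0 < d := by omega
  set i₁ : Fin d := ⟨0, hd0⟩ with hi₁
  constructor
  · -- forward direction
    intro hcur
    -- Cauchy data: interior nodes with a coordinate equal to n, high slices, vanish
    have cauchy2 : ∀ q, q ∈ Dset d n → (∃ i, q i = (n:ℤ)) → t + 1 ≤ sum1 q → u q = 0 := by
      rintro q hq ⟨i, hi⟩ hs
      set p := Function.update q i ((n:ℤ) + 1) with hp
      have hro : ∀ j, j ≠ i → 1 ≤ p j ∧ p j ≤ (n:ℤ) := fun j hj => by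
        rw [hp, Function.update_of_ne hj]; exact hq j
      have hpi : p i = (n:ℤ) + 1 := by rw [hp, Function.update_self]
      have hpB : p ∈ Bset d n := (bset_iff hn).mpr ⟨i, Or.inr hpi, hro⟩
      have hsp : sum1 p = sum1 q + 1 := by rw [hp, sum1_update]; omega
      have hpJ : p ∉ JS d n t := notJS_high (by omega)
      have hup : u p = 0 := by rw [hub p hpB]; exact hφ p hpJ
      have hnb : nbrD d n p = {Function.update p i (n:ℤ)} := nbrD_top hn i hpi hro
      have hqq : Function.update p i (n:ℤ) = q := by
        funext j
        by_cases hj : j = i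
        · subst hj; rw [Function.update_self]; exact hi.symm
        · rw [Function.update_of_ne hj, hp, Function.update_of_ne hj]
      have hcp := hcur p ⟨hpB, hpJ⟩
      rw [cur, hnb, Finset.sum_singleton, hqq, hup] at hcp
      have hadj : Adj d n p q := by
        refine ⟨?_, Set.mem_union_right _ hpB, Set.mem_union_left _ hq, Or.inr hq⟩
        rw [← hqq]
        exact dist1_update p i (Or.inr (by omega))
      have hγpq : 0 < γ p q := hγp p q hadj
      rcases mul_eq_zero.mp hcp with h | h
      · exact absurd h (ne_of_gt hγpq)
      · linarith
    -- main double induction on (slice height, first coordinate)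
    have key : ∀ m : ℕ, ∀ q, q ∈ Dset d n → t + 1 ≤ sum1 q →
        (((d:ℤ) * n - sum1 q).toNat * (n + 1) + ((n:ℤ) - q i₁).toNat ≤ m) → u q = 0 := by
      intro m
      induction m using Nat.strong_induction_on with
      | _ m ih =>
      intro q hq hs hm
      by_cases hq1 : q i₁ = (n:ℤ)
      · exact cauchy2 q hq ⟨i₁, hq1⟩ hs
      · have hq1lt : q i₁ < (n:ℤ) := lt_of_le_of_ne (hq i₁).2 hq1
        have hq1ge : 1 ≤ q i₁ := (hq i₁).1
        have hsq_le : sum1 q ≤ (d:ℤ) * n := sum1_le_of_D hq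
        set p := Function.update q i₁ (q i₁ + 1) with hp
        have hpi1 : p i₁ = q i₁ + 1 := by rw [hp, Function.update_self]
        have hpD : p ∈ Dset d n := by
          intro j
          by_cases hj : j = i₁
          · subst hj; rw [hp, Function.update_self]; omega
          · rw [hp, Function.update_of_ne hj]; exact hq j
        have hsp : sum1 p = sum1 q + 1 := by rw [hp, sum1_update]; ring
        have hsp_le : sum1 p ≤ (d:ℤ) * n := sum1_le_of_D hpD
        -- monotone step: anything strictly above slice sum1 q vanishes
        have hmono : ∀ r, r ∈ Dset d n → sum1 q < sum1 r → u r = 0 := by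
          intro r hr hlt
          have h1 : sum1 r ≤ (d:ℤ) * n := sum1_le_of_D hr
          have h2 : 1 ≤ r i₁ := (hr i₁).1
          refine ih (((d:ℤ) * n - sum1 r).toNat * (n + 1) + ((n:ℤ) - r i₁).toNat) ?_ r hr
            (by omega) le_rfl
          have hA : ((d:ℤ) * n - sum1 r).toNat < ((d:ℤ) * n - sum1 q).toNat := by omega
          have hB : ((n:ℤ) - r i₁).toNat ≤ n := by omega
          calc ((d:ℤ) * n - sum1 r).toNat * (n + 1) + ((n:ℤ) - r i₁).toNat
              < ((d:ℤ) * n - sum1 q).toNat * (n + 1) + ((n:ℤ) - q i₁).toNat :=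
                meas_lt hA hB
            _ ≤ m := hm
        have hup : u p = 0 := hmono p hpD (by omega)
        have hpV : p ∈ Vset d n := Set.mem_union_left _ hpD
        have hdistpq : dist1 p q = 1 := by
          apply dist1_single i₁ (Or.inr (by omega))
          intro j hj
          rw [hp, Function.update_of_ne hj]
        have hadjpq : Adj d n p q := ⟨hdistpq, hpV, Set.mem_union_left _ hq, Or.inl hpD⟩
        have hqmem : q ∈ nbr d n p := mem_nbr.mpr hadjpq
        have hlap := huh p hpD
        rw [lap] at hlap
        have hsingle : ∑ r ∈ nbr d n p, γ r p * (u r - u p) = γ q p * (u q - u p) := by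
          apply Finset.sum_eq_single_of_mem q hqmem
          intro r hr hrq
          have hadj := mem_nbr.mp hr
          obtain ⟨mm, hmm, hrest⟩ := dist1_one hadj.1
          have hsr : sum1 r = sum1 p + (r mm - p mm) := sum1_nbr mm hrest
          have hur : u r = 0 := by
            rcases hmm with hup1 | hdn1
            · rcases hadj.2.2.1 with hrD | hrB
              · exact hmono r hrD (by omega)
              · rw [hub r hrB]; exact hφ r (notJS_high (by omega))
            · by_cases hmi : mm = i₁
              · exfalso
                apply hrq
                funext j
                by_cases hj : j = mm
                · subst hj
                  rw [hmi] at hdn1 ⊢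
                  rw [hpi1] at hdn1
                  omega
                · rw [hrest j hj, hp]
                  rw [hmi] at hj
                  rw [Function.update_of_ne hj]
              · have hri : r i₁ = q i₁ + 1 := by
                  rw [hrest i₁ (fun hc => hmi hc.symm), hpi1]
                rcases hadj.2.2.1 with hrD | hrB
                · refine ih (((d:ℤ) * n - sum1 r).toNat * (n + 1) + ((n:ℤ) - r i₁).toNat) ?_
                    r hrD (by omega) le_rfl
                  have hrle := (hrD i₁).2
                  have hAeq : ((d:ℤ) * n - sum1 r).toNat = ((d:ℤ) * n - sum1 q).toNat := by
                    omega
                  have hBlt : ((n:ℤ) - r i₁).toNat < ((n:ℤ) - q i₁).toNat := by omega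
                  rw [hAeq]
                  have := Nat.add_lt_add_left hBlt (((d:ℤ) * n - sum1 q).toNat * (n + 1))
                  omega
                · rw [hub r hrB]
                  apply hφ
                  apply notJS_of (by omega)
                  intro j
                  by_cases hj : j = mm
                  · subst hj
                    have := (hpD j).2
                    omega
                  · rw [hrest j hj]
                    have := (hpD j).2
                    omega
          rw [hur, hup]
          ring
        rw [hsingle, hup] at hlap
        have hγq : 0 < γ q p := by rw [hγs q p]; exact hγp p q hadjpq
        rcases mul_eq_zero.mp hlap with h | h
        · exact absurd h (ne_of_gt hγq)
        · linarith
    rintro p ⟨hpD, hps⟩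
    exact key (((d:ℤ) * n - sum1 p).toNat * (n + 1) + ((n:ℤ) - p i₁).toNat) p hpD
      (by omega) le_rfl
  · -- backward direction
    intro hL
    have hUzero : ∀ p, p ∈ Dset d n → t + 2 ≤ sum1 p → u p = 0 := by
      set v : V d → ℝ := fun p => if p ∈ Dset d n ∧ t + 2 ≤ sum1 p then u p else 0 with hv
      have hvs : ∀ p, ¬(p ∈ Dset d n ∧ t + 2 ≤ sum1 p) → v p = 0 := fun p h => if_neg h
      have hvu : ∀ p, p ∈ Dset d n → t + 2 ≤ sum1 p → v p = u p := fun p h1 h2 => if_pos ⟨h1, h2⟩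
      have hvh : ∀ p, p ∈ Dset d n → t + 2 ≤ sum1 p → lap d n γ v p = 0 := by
        intro p hpD hps
        have heq : lap d n γ v p = lap d n γ u p := by
          rw [lap, lap]
          apply Finset.sum_congr rfl
          intro r hr
          have hadj := mem_nbr.mp hr
          obtain ⟨mm, hmm, hrest⟩ := dist1_one hadj.1
          have hsr : sum1 r = sum1 p + (r mm - p mm) := sum1_nbr mm hrest
          have hvr : v r = u r := by
            rcases hadj.2.2.1 with hrD | hrB
            · by_cases h2 : t + 2 ≤ sum1 r
              · exact hvu r hrD h2
              · rw [hvs r (fun hc => h2 hc.2), hL r ⟨hrD, by omega⟩]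
            · rw [hvs r (fun hc => hrB.1 hc.1)]
              symm
              rw [hub r hrB]
              apply hφ
              rcases hmm with h1 | h1
              · exact notJS_high (by omega)
              · apply notJS_of (by omega)
                intro j
                by_cases hj : j = mm
                · subst hj
                  have := (hpD j).2
                  omega
                · rw [hrest j hj]
                  have := (hpD j).2
                  omega
          rw [hvr, hvu p hpD hps]
        rw [heq]
        exact huh p hpD
      have mp : ∀ w : V d → ℝ, (∀ p, ¬(p ∈ Dset d n ∧ t + 2 ≤ sum1 p) → w p = 0) →
          (∀ p, p ∈ Dset d n → t + 2 ≤ sum1 p → lap d n γ w p = 0) → ∀ p, w p ≤ 0 := by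
        intro w hws hwh
        by_contra hcon
        push_neg at hcon
        obtain ⟨p₀, hp₀⟩ := hcon
        set T := (box d n).filter (fun p => 0 < w p) with hT
        have hmemD : ∀ r, 0 < w r → r ∈ Dset d n ∧ t + 2 ≤ sum1 r := by
          intro r h
          by_contra hc
          rw [hws r hc] at h
          linarith
        have hmemT : ∀ r, 0 < w r → r ∈ T := fun r h =>
          Finset.mem_filter.mpr ⟨mem_box_of_V (Set.mem_union_left _ (hmemD r h).1), h⟩
        obtain ⟨b, hbT, hbmax⟩ := Finset.exists_max_image T w ⟨p₀, hmemT p₀ hp₀⟩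
        set M := w b with hM
        have hMpos : 0 < M := (Finset.mem_filter.mp hbT).2
        have hle : ∀ r, w r ≤ M := by
          intro r
          by_cases h : 0 < w r
          · exact hbmax r (hmemT r h)
          · linarith
        set A := T.filter (fun p => w p = M) with hA
        obtain ⟨p₁, hp₁A, hp₁min⟩ :=
          Finset.exists_min_image A sum1 ⟨b, Finset.mem_filter.mpr ⟨hbT, rfl⟩⟩
        have hp₁M : w p₁ = M := (Finset.mem_filter.mp hp₁A).2
        have hp₁pos : 0 < w p₁ := by rw [hp₁M]; exact hMpos
        have hp₁D := hmemD p₁ hp₁pos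
        have hlap := hwh p₁ hp₁D.1 hp₁D.2
        rw [lap] at hlap
        have hterm : ∀ r ∈ nbr d n p₁, γ r p₁ * (w r - w p₁) = 0 := by
          have hnonpos : ∀ r ∈ nbr d n p₁, γ r p₁ * (w r - w p₁) ≤ 0 := by
            intro r hr
            have hadj := mem_nbr.mp hr
            have hγr : 0 < γ r p₁ := by rw [hγs r p₁]; exact hγp p₁ r hadj
            have h1 : w r - w p₁ ≤ 0 := by
              have := hle r
              rw [hp₁M]
              linarith
            exact mul_nonpos_of_nonneg_of_nonpos (le_of_lt hγr) h1
          exact (Finset.sum_eq_zero_iff_of_nonpos hnonpos).mp hlap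
        have hex2 : ∃ i, 2 ≤ p₁ i := by
          by_contra hc
          push_neg at hc
          have hsle : sum1 p₁ ≤ ∑ _i : Fin d, (1:ℤ) :=
            Finset.sum_le_sum fun i _ => by have := hc i; omega
          have hsum : (∑ _i : Fin d, (1:ℤ)) = (d:ℤ) := by simp
          rw [hsum] at hsle
          have := hp₁D.2
          omega
        obtain ⟨i, hi2⟩ := hex2
        set r₁ := Function.update p₁ i (p₁ i - 1) with hr₁
        have hr₁D : r₁ ∈ Dset d n := by
          intro j
          by_cases hj : j = i
          · subst hj
            rw [hr₁, Function.update_self]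
            have := (hp₁D.1 j).2
            omega
          · rw [hr₁, Function.update_of_ne hj]
            exact hp₁D.1 j
        have hr₁adj : Adj d n p₁ r₁ := by
          refine ⟨?_, Set.mem_union_left _ hp₁D.1, Set.mem_union_left _ hr₁D, Or.inl hp₁D.1⟩
          rw [hr₁]
          exact dist1_update p₁ i (Or.inr rfl)
        have hr₁mem : r₁ ∈ nbr d n p₁ := mem_nbr.mpr hr₁adj
        have hzero := hterm r₁ hr₁mem
        have hγr : 0 < γ r₁ p₁ := by rw [hγs r₁ p₁]; exact hγp p₁ r₁ hr₁adj
        have hwr : w r₁ = M := by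
          rcases mul_eq_zero.mp hzero with h | h
          · exact absurd h (ne_of_gt hγr)
          · rw [← hp₁M]; linarith
        have hr₁A : r₁ ∈ A := Finset.mem_filter.mpr
          ⟨hmemT r₁ (by rw [hwr]; exact hMpos), hwr⟩
        have hmin := hp₁min r₁ hr₁A
        have hsr : sum1 r₁ = sum1 p₁ - 1 := by rw [hr₁, sum1_update]; ring
        omega
      intro p hpD hps
      have h1 := mp v hvs hvh p
      have h2 := mp (fun q => -v q) (fun q h => by show -v q = 0; rw [hvs q h, neg_zero])
        (fun q hq1 hq2 => by
          have hneg : lap d n γ (fun q => -v q) q = -lap d n γ v q := by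
            rw [lap, lap, ← Finset.sum_neg_distrib]
            apply Finset.sum_congr rfl
            intro r _
            show γ r q * (-v r - -v q) = -(γ r q * (v r - v q))
            ring
          rw [hneg, hvh q hq1 hq2, neg_zero]) p
      have h2' : -v p ≤ 0 := h2
      have hv0 : v p = 0 := by linarith
      rw [← hvu p hpD hps]
      exact hv0
    rintro p ⟨hpB, hpJ⟩
    obtain ⟨i, hi, hro⟩ := (bset_iff hn).mp hpB
    have hup : u p = 0 := by rw [hub p hpB]; exact hφ p hpJ
    rcases hi with h0 | hnp
    · have hnb := nbrD_bot hn i h0 hro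
      rw [cur, hnb, Finset.sum_singleton]
      have hqD : Function.update p i 1 ∈ Dset d n := updD_bot hn i hro
      have hsq : sum1 (Function.update p i 1) = sum1 p + 1 := by rw [sum1_update]; omega
      have hsp : t + 1 ≤ sum1 p := by
        by_contra hc
        push_neg at hc
        exact hpJ (Or.inl ⟨hpB, by omega, i, h0⟩)
      have huq : u (Function.update p i 1) = 0 := hUzero _ hqD (by omega)
      rw [huq, hup]
      ring
    · have hnb := nbrD_top hn i hnp hro
      rw [cur, hnb, Finset.sum_singleton]
      have hqD : Function.update p i (n:ℤ) ∈ Dset d n := updD_top hn i hro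
      have hsq : sum1 (Function.update p i (n:ℤ)) = sum1 p - 1 := by rw [sum1_update]; omega
      have hsp : t + 2 ≤ sum1 p := by
        by_contra hc
        push_neg at hc
        exact hpJ (Or.inr ⟨hpB, by omega, i, hnp⟩)
      have huq : u (Function.update p i (n:ℤ)) = 0 := by
        by_cases h2 : t + 2 ≤ sum1 (Function.update p i (n:ℤ))
        · exact hUzero _ hqD h2
        · exact hL _ ⟨hqD, by omega⟩
      rw [huq, hup]
      ring

end DiscreteCalderon
end
end

section
/- In the two-dimensional square lattice (d = 2), for the base case t = d−1 = 1: L_2 = {(1,1)}, K_1 = {(0,1), (1,0)}, and the orthogonal complement of ker T₁^{(1)} in ℝ^{K_1} is one-dimensional, spanned by the vector (γ_{(0,1)(1,1)}, γ_{(1,0)(1,1)}). Consequently, ker T₁^{(1)} uniquely determines the ratios and, together with the current at a single excitation, the values of the conductivities on the corner edges E(K_1, L_2). -/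
noncomputable section
open Classical Finset

namespace DiscreteCalderon

section Aux
variable {n : ℕ}

lemma funext2 {p q : V 2} : p = q ↔ p 0 = q 0 ∧ p 1 = q 1 := by
  constructor
  · rintro rfl; exact ⟨rfl, rfl⟩
  · rintro ⟨h0, h1⟩; funext i; fin_cases i <;> assumption

lemma mem_Dset2 {x : V 2} : x ∈ Dset 2 n ↔ (1 ≤ x 0 ∧ x 0 ≤ (n:ℤ)) ∧ (1 ≤ x 1 ∧ x 1 ≤ (n:ℤ)) := by
  unfold Dset; simp [Set.mem_setOf_eq, Fin.forall_fin_two]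

lemma dist1_two (p q : V 2) : dist1 p q = |p 0 - q 0| + |p 1 - q 1| :=
  Fin.sum_univ_two _

lemma sum1_two (x : V 2) : sum1 x = x 0 + x 1 := Fin.sum_univ_two _

lemma mem_box2 {p : V 2} : p ∈ box 2 n ↔ (0 ≤ p 0 ∧ p 0 ≤ (n:ℤ)+1) ∧ (0 ≤ p 1 ∧ p 1 ≤ (n:ℤ)+1) := by
  unfold box
  simp [Fintype.mem_piFinset, Fin.forall_fin_two, Finset.mem_Icc]

lemma dist1_symm (p q : V 2) : dist1 p q = dist1 q p := by
  simp [dist1, abs_sub_comm]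

lemma adj_symm {p q : V 2} (h : Adj 2 n p q) : Adj 2 n q p :=
  ⟨by rw [dist1_symm]; exact h.1, h.2.2.1, h.2.1, h.2.2.2.symm⟩

lemma adj_iff_symm (p q : V 2) : Adj 2 n p q ↔ Adj 2 n q p :=
  ⟨adj_symm, adj_symm⟩

lemma Vset_subset_box {p : V 2} (hp : p ∈ Vset 2 n) : p ∈ box 2 n := by
  rw [mem_box2]
  rcases hp with hp | hp
  · rw [mem_Dset2] at hp; omega
  · obtain ⟨-, q, hq, hd⟩ := hp
    rw [mem_Dset2] at hq
    rw [dist1_two] at hd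
    have n0 := abs_nonneg (p 0 - q 0)
    have n1 := abs_nonneg (p 1 - q 1)
    rcases abs_choice (p 0 - q 0) with h0 | h0 <;> rcases abs_choice (p 1 - q 1) with h1 | h1 <;>
      omega

lemma sum1_close {p q : V 2} (h : Adj 2 n p q) :
    sum1 q = sum1 p - 1 ∨ sum1 q = sum1 p + 1 := by
  have hd := h.1
  rw [dist1_two] at hd
  rw [sum1_two, sum1_two]
  have n0 := abs_nonneg (p 0 - q 0)
  have n1 := abs_nonneg (p 1 - q 1)
  rcases abs_choice (p 0 - q 0) with h0 | h0 <;> rcases abs_choice (p 1 - q 1) with h1 | h1 <;>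
    omega

lemma a_mem_Bset (hn : 1 ≤ n) : (![0,1] : V 2) ∈ Bset 2 n := by
  refine ⟨by rw [mem_Dset2]; simp, ![1,1], by rw [mem_Dset2]; simp; omega, ?_⟩
  rw [dist1_two]; simp

lemma b_mem_Bset (hn : 1 ≤ n) : (![1,0] : V 2) ∈ Bset 2 n := by
  refine ⟨by rw [mem_Dset2]; simp, ![1,1], by rw [mem_Dset2]; simp; omega, ?_⟩
  rw [dist1_two]; simp

lemma c_mem_Dset (hn : 1 ≤ n) : (![1,1] : V 2) ∈ Dset 2 n := by
  rw [mem_Dset2]; simp; omega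

lemma K1_eq (hn : 1 ≤ n) : K 2 n 1 = ({![0, 1], ![1, 0]} : Set (V 2)) := by
  ext p
  constructor
  · rintro ⟨⟨hpD, q, hq, hd⟩, hs⟩
    rw [mem_Dset2] at hpD hq
    rw [dist1_two] at hd
    rw [sum1_two] at hs
    have hp : p = ![0,1] ∨ p = ![1,0] := by
      rw [funext2, funext2]
      simp only [Matrix.cons_val_zero, Matrix.cons_val_one, Matrix.head_cons]
      have n0 := abs_nonneg (p 0 - q 0)
      have n1 := abs_nonneg (p 1 - q 1)
      rcases abs_choice (p 0 - q 0) with h0 | h0 <;> rcases abs_choice (p 1 - q 1) with h1 | h1 <;>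
        omega
    rcases hp with h | h
    · exact Or.inl h
    · exact Or.inr h
  · rintro (rfl | rfl)
    · exact ⟨a_mem_Bset hn, by rw [sum1_two]; simp⟩
    · exact ⟨b_mem_Bset hn, by rw [sum1_two]; simp⟩

lemma L2_eq (hn : 1 ≤ n) : L 2 n 2 = ({![1, 1]} : Set (V 2)) := by
  ext p
  constructor
  · rintro ⟨hpD, hs⟩
    rw [mem_Dset2] at hpD
    rw [sum1_two] at hs
    have : p = ![1,1] := by
      rw [funext2]
      simp only [Matrix.cons_val_zero, Matrix.cons_val_one, Matrix.head_cons]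
      omega
    exact this
  · rintro rfl
    exact ⟨c_mem_Dset hn, by rw [sum1_two]; simp⟩

end Aux
section Energy
variable {n : ℕ}

lemma energy_zero (γ : V 2 → V 2 → ℝ) (hγ : GoodCond 2 n γ)
    (w : V 2 → ℝ) (hw : ∀ p ∈ box 2 n, w p * lap 2 n γ w p = 0) :
    ∀ p ∈ box 2 n, ∀ q ∈ box 2 n, Adj 2 n p q → w p = w q := by
  classical
  set B := box 2 n with hB
  -- S = 0
  have hS : ∑ p ∈ B, ∑ q ∈ B, (if Adj 2 n p q then γ q p * (w p * w q - w p * w p) else 0) = 0 := by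
    have : ∀ p ∈ B, ∑ q ∈ B, (if Adj 2 n p q then γ q p * (w p * w q - w p * w p) else 0)
        = w p * lap 2 n γ w p := by
      intro p _
      rw [lap, nbr, Finset.sum_filter, Finset.mul_sum]
      refine Finset.sum_congr rfl fun q _ => ?_
      split <;> ring
    rw [Finset.sum_congr rfl this]
    exact Finset.sum_eq_zero hw
  -- antisymmetric sum is zero
  have hU : ∑ p ∈ B, ∑ q ∈ B, (if Adj 2 n p q then γ q p * (w q ^ 2 - w p ^ 2) else 0) = 0 := by
    set U := ∑ p ∈ B, ∑ q ∈ B, (if Adj 2 n p q then γ q p * (w q ^ 2 - w p ^ 2) else 0) with hUdef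
    have : U = -U := by
      conv_lhs => rw [hUdef, Finset.sum_comm]
      rw [hUdef, ← Finset.sum_neg_distrib]
      refine Finset.sum_congr rfl fun p _ => ?_
      rw [← Finset.sum_neg_distrib]
      refine Finset.sum_congr rfl fun q _ => ?_
      rw [adj_iff_symm (n := n) q p]
      split
      · rw [hγ.1 p q]; ring
      · simp
    linarith
  -- T = sum of nonneg terms equals 0
  have hT : ∑ p ∈ B, ∑ q ∈ B, (if Adj 2 n p q then γ q p * (w q - w p) ^ 2 else 0) = 0 := by
    have expand : ∀ p q : V 2, (if Adj 2 n p q then γ q p * (w q - w p) ^ 2 else 0)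
        = (if Adj 2 n p q then γ q p * (w q ^ 2 - w p ^ 2) else 0)
          - 2 * (if Adj 2 n p q then γ q p * (w p * w q - w p * w p) else 0) := by
      intro p q; split <;> ring
    calc ∑ p ∈ B, ∑ q ∈ B, (if Adj 2 n p q then γ q p * (w q - w p) ^ 2 else 0)
        = (∑ p ∈ B, ∑ q ∈ B, (if Adj 2 n p q then γ q p * (w q ^ 2 - w p ^ 2) else 0))
          - 2 * ∑ p ∈ B, ∑ q ∈ B, (if Adj 2 n p q then γ q p * (w p * w q - w p * w p) else 0) := by
          rw [Finset.mul_sum, ← Finset.sum_sub_distrib]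
          refine Finset.sum_congr rfl fun p _ => ?_
          rw [Finset.mul_sum, ← Finset.sum_sub_distrib]
          exact Finset.sum_congr rfl fun q _ => expand p q
      _ = 0 := by rw [hU, hS]; ring
  intro p hp q hq hpq
  have hnonneg : ∀ a ∈ B, ∀ b ∈ B, 0 ≤ (if Adj 2 n a b then γ b a * (w b - w a) ^ 2 else 0) := by
    intro a _ b _
    by_cases h : Adj 2 n a b
    · rw [if_pos h]
      exact mul_nonneg (le_of_lt (hγ.2 b a (adj_symm h))) (sq_nonneg _)
    · rw [if_neg h]
  have houter := (Finset.sum_eq_zero_iff_of_nonneg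
    (fun a ha => Finset.sum_nonneg (fun b hb => hnonneg a ha b hb))).mp hT p hp
  have hterm := (Finset.sum_eq_zero_iff_of_nonneg (fun b hb => hnonneg p hp b hb)).mp houter q hq
  rw [if_pos hpq] at hterm
  have hγpos := hγ.2 q p (adj_symm hpq)
  have : (w q - w p) ^ 2 = 0 := by
    rcases mul_eq_zero.mp hterm with h | h
    · exact absurd h (ne_of_gt hγpos)
    · exact h
  have := sq_eq_zero_iff.mp this
  linarith

end Energy
section Deep
variable {n : ℕ}

lemma deep_zero (hn : 1 ≤ n) (γ : V 2 → V 2 → ℝ) (hγ : GoodCond 2 n γ)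
    (φ u : V 2 → ℝ) (hsol : IsSol 2 n γ φ u)
    (hφ : ∀ p, p ∉ K 2 n 1 → φ p = 0) (hu : u ![1,1] = 0) :
    ∀ p, p ∈ Dset 2 n → 3 ≤ sum1 p → u p = 0 := by
  classical
  obtain ⟨hout, hharm, hbd⟩ := hsol
  set w : V 2 → ℝ := fun p => if p ∈ Dset 2 n ∧ 3 ≤ sum1 p then u p else 0 with hwdef
  -- key : u and w agree on deep points and their neighbours
  have key : ∀ p, p ∈ Dset 2 n ∧ 3 ≤ sum1 p → ∀ q ∈ nbr 2 n p, w q = u q := by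
    rintro p ⟨hpD, hps⟩ q hq
    rw [nbr, Finset.mem_filter] at hq
    obtain ⟨hqbox, hadj⟩ := hq
    have hsum := sum1_close hadj
    by_cases hqdeep : q ∈ Dset 2 n ∧ 3 ≤ sum1 q
    · rw [hwdef]; simp only [if_pos hqdeep]
    · rw [hwdef]; simp only [if_neg hqdeep]
      rcases hadj.2.2.1 with hqD | hqB
      · -- q interior, sum1 q = 2 so q = (1,1)
        have hq2 : sum1 q = 2 := by
          by_contra h
          exact hqdeep ⟨hqD, by omega⟩
        have : q = ![1,1] := by
          rw [mem_Dset2] at hqD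
          rw [sum1_two] at hq2
          rw [funext2]
          simp only [Matrix.cons_val_zero, Matrix.cons_val_one, Matrix.head_cons]
          omega
        rw [this, hu]
      · -- q boundary, sum1 q ≥ 2 so not in K_1
        have : φ q = 0 := by
          apply hφ
          rintro ⟨-, hq1⟩
          omega
        rw [hbd q hqB, this]
  have hwlap : ∀ p ∈ box 2 n, w p * lap 2 n γ w p = 0 := by
    intro p hp
    by_cases hpdeep : p ∈ Dset 2 n ∧ 3 ≤ sum1 p
    · have : lap 2 n γ w p = lap 2 n γ u p := by
        rw [lap, lap]
        refine Finset.sum_congr rfl fun q hq => ?_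
        rw [key p hpdeep q hq, hwdef]
        simp only [if_pos hpdeep]
      rw [this, hharm p hpdeep.1, mul_zero]
    · rw [hwdef]; simp only [if_neg hpdeep, zero_mul]
  have hconst := energy_zero γ hγ w hwlap
  -- descending induction
  have main : ∀ m : ℕ, ∀ p, p ∈ Dset 2 n → 3 ≤ sum1 p → sum1 p ≤ (m:ℤ) → w p = 0 := by
    intro m
    induction m with
    | zero => intro p _ h3 hle; omega
    | succ m ih =>
      intro p hpD h3 hle
      rw [mem_Dset2] at hpD
      rw [sum1_two] at h3 hle
      have hcoord : 2 ≤ p 0 ∨ 2 ≤ p 1 := by omega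
      -- build the lowered neighbour
      rcases hcoord with hc | hc
      · set q : V 2 := ![p 0 - 1, p 1] with hqdef
        have hq0 : q 0 = p 0 - 1 := rfl
        have hq1 : q 1 = p 1 := rfl
        have hqD : q ∈ Dset 2 n := by rw [mem_Dset2, hq0, hq1]; omega
        have hadj : Adj 2 n p q := by
          refine ⟨?_, Or.inl (mem_Dset2.mpr (by omega)), Or.inl hqD, Or.inl (mem_Dset2.mpr (by omega))⟩
          rw [dist1_two, hq0, hq1]
          simp
        have hwpq := hconst p (Vset_subset_box (Or.inl (mem_Dset2.mpr (by omega))))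
          q (Vset_subset_box (Or.inl hqD)) hadj
        rw [hwpq]
        by_cases hq3 : 3 ≤ sum1 q
        · exact ih q hqD hq3 (by rw [sum1_two, hq0, hq1]; omega)
        · show (if q ∈ Dset 2 n ∧ 3 ≤ sum1 q then u q else 0) = 0
          rw [if_neg]
          rintro ⟨-, h⟩; exact hq3 h
      · set q : V 2 := ![p 0, p 1 - 1] with hqdef
        have hq0 : q 0 = p 0 := rfl
        have hq1 : q 1 = p 1 - 1 := rfl
        have hqD : q ∈ Dset 2 n := by rw [mem_Dset2, hq0, hq1]; omega
        have hadj : Adj 2 n p q := by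
          refine ⟨?_, Or.inl (mem_Dset2.mpr (by omega)), Or.inl hqD, Or.inl (mem_Dset2.mpr (by omega))⟩
          rw [dist1_two, hq0, hq1]
          simp
        have hwpq := hconst p (Vset_subset_box (Or.inl (mem_Dset2.mpr (by omega))))
          q (Vset_subset_box (Or.inl hqD)) hadj
        rw [hwpq]
        by_cases hq3 : 3 ≤ sum1 q
        · exact ih q hqD hq3 (by rw [sum1_two, hq0, hq1]; omega)
        · show (if q ∈ Dset 2 n ∧ 3 ≤ sum1 q then u q else 0) = 0
          rw [if_neg]
          rintro ⟨-, h⟩; exact hq3 h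
  intro p hpD hps
  have hbound : sum1 p ≤ ((2*n : ℕ) : ℤ) := by
    rw [mem_Dset2] at hpD
    rw [sum1_two]
    push_cast
    omega
  have := main (2*n) p hpD hps hbound
  rw [hwdef] at this
  simpa [if_pos (⟨hpD, hps⟩ : p ∈ Dset 2 n ∧ 3 ≤ sum1 p)] using this

end Deep
section Kernel
variable {n : ℕ}

lemma a_ne_b : (![0,1] : V 2) ≠ ![1,0] := by
  intro h
  have := congrFun h 0
  simp at this

lemma adj_c_a (hn : 1 ≤ n) : Adj 2 n ![1,1] ![0,1] := by
  refine ⟨?_, Or.inl (c_mem_Dset hn), Or.inr (a_mem_Bset hn), Or.inl (c_mem_Dset hn)⟩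
  rw [dist1_two]; simp

lemma adj_c_b (hn : 1 ≤ n) : Adj 2 n ![1,1] ![1,0] := by
  refine ⟨?_, Or.inl (c_mem_Dset hn), Or.inr (b_mem_Bset hn), Or.inl (c_mem_Dset hn)⟩
  rw [dist1_two]; simp

lemma ab_subset_nbr_c (hn : 1 ≤ n) :
    ({![0,1], ![1,0]} : Finset (V 2)) ⊆ nbr 2 n ![1,1] := by
  intro q hq
  rw [Finset.mem_insert, Finset.mem_singleton] at hq
  rw [nbr, Finset.mem_filter]
  rcases hq with rfl | rfl
  · exact ⟨Vset_subset_box (Or.inr (a_mem_Bset hn)), adj_c_a hn⟩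
  · exact ⟨Vset_subset_box (Or.inr (b_mem_Bset hn)), adj_c_b hn⟩

lemma kernel_orth (hn : 1 ≤ n) (γ : V 2 → V 2 → ℝ) (hγ : GoodCond 2 n γ)
    (φ u : V 2 → ℝ) (hsol : IsSol 2 n γ φ u)
    (hφ : ∀ p, p ∉ K 2 n 1 → φ p = 0) (hu : u ![1,1] = 0) :
    γ ![0,1] ![1,1] * φ ![0,1] + γ ![1,0] ![1,1] * φ ![1,0] = 0 := by
  classical
  have hdeep := deep_zero hn γ hγ φ u hsol hφ hu
  obtain ⟨hout, hharm, hbd⟩ := hsol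
  have hlapc := hharm ![1,1] (c_mem_Dset hn)
  rw [lap] at hlapc
  have hsumc : sum1 (![1,1] : V 2) = 2 := by rw [sum1_two]; simp
  have hred : ∑ q ∈ nbr 2 n ![1,1], γ q ![1,1] * (u q - u ![1,1])
      = ∑ q ∈ ({![0,1], ![1,0]} : Finset (V 2)), γ q ![1,1] * (u q - u ![1,1]) := by
    symm
    apply Finset.sum_subset (ab_subset_nbr_c hn)
    intro q hq hqnot
    rw [Finset.mem_insert, Finset.mem_singleton] at hqnot
    push_neg at hqnot
    rw [nbr, Finset.mem_filter] at hq
    have hadj := hq.2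
    have hs := sum1_close hadj
    rw [hsumc] at hs
    rw [hu, sub_zero]
    have huq : u q = 0 := by
      rcases hs with hs | hs
      · -- sum1 q = 1 : q must be a or b, contradiction
        rcases hadj.2.2.1 with hqD | hqB
        · rw [mem_Dset2] at hqD
          rw [sum1_two] at hs
          omega
        · have hK : q ∈ K 2 n 1 := ⟨hqB, by omega⟩
          rw [K1_eq hn] at hK
          rcases hK with h | h
          · exact absurd h hqnot.1
          · exact absurd h hqnot.2
      · rcases hadj.2.2.1 with hqD | hqB
        · exact hdeep q hqD (by omega)
        · rw [hbd q hqB]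
          apply hφ
          rintro ⟨-, h1⟩
          omega
    rw [huq, mul_zero]
  rw [hred, Finset.sum_pair a_ne_b, hu, sub_zero, sub_zero] at hlapc
  rw [hbd _ (a_mem_Bset hn), hbd _ (b_mem_Bset hn)] at hlapc
  exact hlapc

end Kernel
section Final
variable {n : ℕ}

lemma a_notin_Dset : (![0,1] : V 2) ∉ Dset 2 n := by
  rw [mem_Dset2]; simp

lemma b_notin_Dset : (![1,0] : V 2) ∉ Dset 2 n := by
  rw [mem_Dset2]; simp

lemma c_ne_a : (![1,1] : V 2) ≠ ![0,1] := by
  intro h; have := congrFun h 0; simp at this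

lemma c_ne_b : (![1,1] : V 2) ≠ ![1,0] := by
  intro h; have := congrFun h 1; simp at this

lemma adj_corner_a {p : V 2} (hp : p ∈ Dset 2 n) (hadj : Adj 2 n p ![0,1]) : p = ![1,1] := by
  rw [mem_Dset2] at hp
  have hd := hadj.1
  rw [dist1_two] at hd
  simp only [Matrix.cons_val_zero, Matrix.cons_val_one, Matrix.head_cons] at hd
  rw [funext2]
  simp only [Matrix.cons_val_zero, Matrix.cons_val_one, Matrix.head_cons]
  have n0 := abs_nonneg (p 0 - 0)
  have n1 := abs_nonneg (p 1 - 1)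
  rcases abs_choice (p 0 - 0) with h0 | h0 <;> rcases abs_choice (p 1 - 1) with h1 | h1 <;> omega

lemma adj_corner_b {p : V 2} (hp : p ∈ Dset 2 n) (hadj : Adj 2 n p ![1,0]) : p = ![1,1] := by
  rw [mem_Dset2] at hp
  have hd := hadj.1
  rw [dist1_two] at hd
  simp only [Matrix.cons_val_zero, Matrix.cons_val_one, Matrix.head_cons] at hd
  rw [funext2]
  simp only [Matrix.cons_val_zero, Matrix.cons_val_one, Matrix.head_cons]
  have n0 := abs_nonneg (p 0 - 1)
  have n1 := abs_nonneg (p 1 - 0)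
  rcases abs_choice (p 0 - 1) with h0 | h0 <;> rcases abs_choice (p 1 - 0) with h1 | h1 <;> omega

end Final
/-- the base case in dimension `d = 2`: `K_1 = {(0,1),(1,0)}`,
`L_2 = {(1,1)}`, and the orthogonal complement of `ker T₁^{(1)}` in `ℝ^{K_1}`
consists exactly of the scalar multiples of `(γ_{(0,1)(1,1)}, γ_{(1,0)(1,1)})`. -/
theorem stmt12 (n : ℕ) (hn : 1 ≤ n)
    (γ : V 2 → V 2 → ℝ) (hγ : GoodCond 2 n γ) :
    K 2 n 1 = ({![0, 1], ![1, 0]} : Set (V 2)) ∧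
    L 2 n 2 = ({![1, 1]} : Set (V 2)) ∧
    {w : V 2 → ℝ | (∀ p, p ∉ K 2 n 1 → w p = 0) ∧
        ∀ φ : V 2 → ℝ, ((∀ p, p ∉ K 2 n 1 → φ p = 0) ∧
          ∃ u : V 2 → ℝ, IsSol 2 n γ φ u ∧ ∀ p ∈ L 2 n 2, u p = 0) →
        dot 2 n w φ = 0}
      = {w : V 2 → ℝ | ∃ α : ℝ, w = α • rst (K 2 n 1) (fun q => γ q ![1, 1])} := by
  classical
  have hKmem : ∀ p : V 2, p ∈ K 2 n 1 ↔ p = ![0,1] ∨ p = ![1,0] := by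
    intro p
    rw [K1_eq hn]
    simp [Set.mem_insert_iff, Set.mem_singleton_iff]
  have haK : (![0,1] : V 2) ∈ K 2 n 1 := (hKmem _).mpr (Or.inl rfl)
  have hbK : (![1,0] : V 2) ∈ K 2 n 1 := (hKmem _).mpr (Or.inr rfl)
  have habbox : ({![0,1], ![1,0]} : Finset (V 2)) ⊆ box 2 n := by
    intro q hq
    rw [Finset.mem_insert, Finset.mem_singleton] at hq
    rcases hq with rfl | rfl
    · exact Vset_subset_box (Or.inr (a_mem_Bset hn))
    · exact Vset_subset_box (Or.inr (b_mem_Bset hn))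
  have hγa : 0 < γ ![0,1] ![1,1] := hγ.2 _ _ (adj_symm (adj_c_a hn))
  have hγb : 0 < γ ![1,0] ![1,1] := hγ.2 _ _ (adj_symm (adj_c_b hn))
  refine ⟨K1_eq hn, L2_eq hn, ?_⟩
  ext w
  simp only [Set.mem_setOf_eq]
  constructor
  · rintro ⟨hsupp, hall⟩
    -- the test boundary potential
    set φ₀ : V 2 → ℝ := fun p =>
      if p = ![0,1] then γ ![1,0] ![1,1] else if p = ![1,0] then -(γ ![0,1] ![1,1]) else 0
      with hφ₀def
    have hφ₀a : φ₀ ![0,1] = γ ![1,0] ![1,1] := by rw [hφ₀def]; simp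
    have hφ₀b : φ₀ ![1,0] = -(γ ![0,1] ![1,1]) := by
      rw [hφ₀def]; simp [a_ne_b.symm]
    have hφ₀supp : ∀ p, p ∉ K 2 n 1 → φ₀ p = 0 := by
      intro p hp
      show (if p = ![0,1] then γ ![1,0] ![1,1] else if p = ![1,0] then -(γ ![0,1] ![1,1]) else 0) = 0
      rw [if_neg (fun h : p = ![0,1] => hp (h ▸ haK)),
        if_neg (fun h : p = ![1,0] => hp (h ▸ hbK))]
    have hφ₀zero : ∀ p : V 2, p ≠ ![0,1] → p ≠ ![1,0] → φ₀ p = 0 := by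
      intro p h1 h2
      show (if p = ![0,1] then γ ![1,0] ![1,1] else if p = ![1,0] then -(γ ![0,1] ![1,1]) else 0) = 0
      rw [if_neg h1, if_neg h2]
    have hsol : IsSol 2 n γ φ₀ φ₀ := by
      refine ⟨?_, ?_, fun p _ => rfl⟩
      · intro p hp
        apply hφ₀zero
        · intro h; exact hp (h ▸ Or.inr (a_mem_Bset hn))
        · intro h; exact hp (h ▸ Or.inr (b_mem_Bset hn))
      · intro p hpD
        have hφ₀p : φ₀ p = 0 := by
          apply hφ₀zero
          · intro h; exact a_notin_Dset (h ▸ hpD)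
          · intro h; exact b_notin_Dset (h ▸ hpD)
        rw [lap]
        by_cases hpc : p = ![1,1]
        · subst hpc
          have : ∑ q ∈ nbr 2 n ![1,1], γ q ![1,1] * (φ₀ q - φ₀ ![1,1])
              = ∑ q ∈ ({![0,1], ![1,0]} : Finset (V 2)), γ q ![1,1] * (φ₀ q - φ₀ ![1,1]) := by
            symm
            apply Finset.sum_subset (ab_subset_nbr_c hn)
            intro q hq hqnot
            rw [Finset.mem_insert, Finset.mem_singleton] at hqnot
            push_neg at hqnot
            rw [hφ₀zero q hqnot.1 hqnot.2, hφ₀p, sub_zero, mul_zero]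
          rw [this, Finset.sum_pair a_ne_b, hφ₀a, hφ₀b, hφ₀p]
          ring
        · apply Finset.sum_eq_zero
          intro q hq
          rw [nbr, Finset.mem_filter] at hq
          have hq0 : φ₀ q = 0 := by
            apply hφ₀zero
            · intro h; subst h; exact hpc (adj_corner_a hpD hq.2)
            · intro h; subst h; exact hpc (adj_corner_b hpD hq.2)
          rw [hq0, hφ₀p, sub_zero, mul_zero]
    have hL : ∀ p ∈ L 2 n 2, φ₀ p = 0 := by
      intro p hp
      rw [L2_eq hn, Set.mem_singleton_iff] at hp
      subst hp
      exact hφ₀zero _ c_ne_a c_ne_b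
    have hdot := hall φ₀ ⟨hφ₀supp, φ₀, hsol, hL⟩
    rw [dot] at hdot
    have hdot' : ∑ p ∈ ({![0,1], ![1,0]} : Finset (V 2)), w p * φ₀ p = 0 := by
      rw [← hdot]
      apply Finset.sum_subset habbox
      intro q _ hqnot
      rw [Finset.mem_insert, Finset.mem_singleton] at hqnot
      push_neg at hqnot
      rw [hφ₀zero q hqnot.1 hqnot.2, mul_zero]
    rw [Finset.sum_pair a_ne_b, hφ₀a, hφ₀b] at hdot'
    -- so w a * γ b c = w b * γ a c
    refine ⟨w ![0,1] / γ ![0,1] ![1,1], ?_⟩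
    funext p
    rw [Pi.smul_apply, smul_eq_mul, rst]
    by_cases hpK : p ∈ K 2 n 1
    · rw [if_pos hpK]
      rcases (hKmem p).mp hpK with rfl | rfl
      · rw [div_mul_cancel₀ _ (ne_of_gt hγa)]
      · rw [div_mul_eq_mul_div, eq_div_iff (ne_of_gt hγa)]
        linarith [hdot']
    · rw [if_neg hpK, mul_zero]
      exact hsupp p hpK
  · rintro ⟨α, rfl⟩
    constructor
    · intro p hp
      rw [Pi.smul_apply, smul_eq_mul, rst, if_neg hp, mul_zero]
    · rintro φ ⟨hφsupp, u, hsol, huL⟩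
      have huc : u ![1,1] = 0 := by
        apply huL
        rw [L2_eq hn]
        exact rfl
      have horth := kernel_orth hn γ hγ φ u hsol hφsupp huc
      rw [dot]
      have : ∑ p ∈ box 2 n, (α • rst (K 2 n 1) (fun q => γ q ![1,1])) p * φ p
          = ∑ p ∈ ({![0,1], ![1,0]} : Finset (V 2)),
              (α • rst (K 2 n 1) (fun q => γ q ![1,1])) p * φ p := by
        symm
        apply Finset.sum_subset habbox
        intro q _ hqnot
        rw [Finset.mem_insert, Finset.mem_singleton] at hqnot
        push_neg at hqnot
        have hqK : q ∉ K 2 n 1 := by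
          rw [hKmem]
          rintro (h | h)
          · exact hqnot.1 h
          · exact hqnot.2 h
        rw [Pi.smul_apply, smul_eq_mul, rst, if_neg hqK, mul_zero, zero_mul]
      rw [this, Finset.sum_pair a_ne_b]
      simp only [Pi.smul_apply, smul_eq_mul, rst, if_pos haK, if_pos hbK]
      linear_combination α * horth

end DiscreteCalderon
end
end
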